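/- If an almost Abelian Lie algebra L has two distinct codimension 1 Abelian ideals, then L is isomorphic to the direct sum of the Heisenberg Lie algebra H_F and an Abelian Lie algebra. -/

import Mathlib

variable {F : Type*} [Field F] {V : Type*} [AddCommGroup V] [Module F V]

/-- The almost Abelian Lie algebra `F e₀ ⋉ V` determined by the operator `T = ad_{e₀}|_V`:
the underlying vector space is `F × V`, with bracket `[(t,v),(s,w)] = (0, t • T w - s • T v)`. -/
def AA (F V : Type*) [Field F] [AddCommGroup V] [Module F V] (_T : Module.End F V) : Type _ :=
  F × V

namespace AA

variable {T : Module.End F V}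

instance : AddCommGroup (AA F V T) := inferInstanceAs (AddCommGroup (F × V))
instance : Module F (AA F V T) := inferInstanceAs (Module F (F × V))

instance : LieRing (AA F V T) where
  bracket := fun (x y : F × V) => (((0 : F), x.1 • T y.2 - y.1 • T x.2) : F × V)
  add_lie := by
    rintro ⟨a, u⟩ ⟨b, v⟩ ⟨c, w⟩
    show (((0 : F), (a + b) • T w - c • T (u + v)) : F × V)
      = (((0 : F), a • T w - c • T u) : F × V) + (((0 : F), b • T w - c • T v) : F × V)
    ext
    · simp
    · show (a + b) • T w - c • T (u + v) = (a • T w - c • T u) + (b • T w - c • T v)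
      simp only [map_add, smul_add, add_smul]
      module
  lie_add := by
    rintro ⟨a, u⟩ ⟨b, v⟩ ⟨c, w⟩
    show (((0 : F), a • T (v + w) - (b + c) • T u) : F × V)
      = (((0 : F), a • T v - b • T u) : F × V) + (((0 : F), a • T w - c • T u) : F × V)
    ext
    · simp
    · show a • T (v + w) - (b + c) • T u = (a • T v - b • T u) + (a • T w - c • T u)
      simp only [map_add, smul_add, add_smul]
      module
  lie_self := by
    rintro ⟨a, u⟩
    show (((0 : F), a • T u - a • T u) : F × V) = (0 : F × V)
    ext
    · simp
    · show a • T u - a • T u = (0 : V)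
      simp
  leibniz_lie := by
    rintro ⟨a, u⟩ ⟨b, v⟩ ⟨c, w⟩
    show (((0 : F), a • T (b • T w - c • T v) - (0 : F) • T u) : F × V)
      = (((0 : F), (0 : F) • T w - c • T (a • T v - b • T u)) : F × V)
        + (((0 : F), b • T (a • T w - c • T u) - (0 : F) • T v) : F × V)
    ext
    · simp
    · show a • T (b • T w - c • T v) - (0 : F) • T u
        = ((0 : F) • T w - c • T (a • T v - b • T u)) + (b • T (a • T w - c • T u) - (0 : F) • T v)
      simp only [map_sub, map_smul, zero_smul, smul_sub, smul_smul]
      module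

instance : LieAlgebra F (AA F V T) where
  lie_smul := by
    rintro r ⟨a, u⟩ ⟨b, v⟩
    show (((0 : F), a • T (r • v) - (r • b) • T u) : F × V)
      = r • (((0 : F), a • T v - b • T u) : F × V)
    ext
    · simp
    · show a • T (r • v) - (r • b) • T u = r • (a • T v - b • T u)
      simp only [map_smul, smul_sub, smul_smul, smul_eq_mul]
      module

/-- The distinguished element `e₀`. -/
def e0 (T : Module.End F V) : AA F V T := ((1, 0) : F × V)

/-- The inclusion of the Abelian ideal `V` into `F e₀ ⋉ V`. -/
def incl (T : Module.End F V) : V →ₗ[F] AA F V T where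
  toFun v := ((0, v) : F × V)
  map_add' u v := by
    show (((0 : F), u + v) : F × V) = (((0 : F), u) : F × V) + (((0 : F), v) : F × V)
    ext <;> simp
  map_smul' r v := by
    show (((0 : F), r • v) : F × V) = r • (((0 : F), v) : F × V)
    ext <;> simp

@[simp] lemma bracket_e0_incl (v : V) : ⁅e0 T, incl T v⁆ = incl T (T v) := by
  show (((0 : F), (1 : F) • T v - (0 : F) • T (0 : V)) : F × V) = (((0 : F), T v) : F × V)
  ext <;> simp

end AA


/-- A Lie algebra is almost Abelian if it is non-Abelian and possesses an Abelian ideal of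
codimension 1 (as an `F`-vector subspace). -/
def IsAlmostAbelian (F L : Type*) [Field F] [LieRing L] [LieAlgebra F L] : Prop :=
  ¬IsLieAbelian L ∧
    ∃ I : LieIdeal F L, IsLieAbelian I ∧ Module.rank F (L ⧸ I.toSubmodule) = 1

/-- The operator defining the Heisenberg algebra: `T (a, b) = (b, 0)`. -/
def heisT (F : Type*) [Field F] : Module.End F (F × F) :=
  (LinearMap.snd F F F).prod 0

/-- The Heisenberg Lie algebra `H_F`, with basis `e₀, e₁ = ((0,(1,0)))`, `e₂ = ((0,(0,1)))` and
relations `[e₀, e₂] = e₁`, `[e₀, e₁] = [e₁, e₂] = 0`. -/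
abbrev Heisenberg (F : Type*) [Field F] : Type _ := AA F (F × F) (heisT F)

universe u v


section AuxMax

lemma aux_max {F : Type*} [Field F] {L : Type*} [AddCommGroup L] [Module F L]
    {p q : Submodule F L} (h : Module.rank F (L ⧸ p) = 1) (hpq : p < q) : q = ⊤ := by
  have hq'ne : q.map p.mkQ ≠ ⊥ := by
    obtain ⟨a, haq, hap⟩ := SetLike.exists_of_lt hpq
    intro hbot
    have hm : p.mkQ a ∈ q.map p.mkQ := Submodule.mem_map_of_mem haq
    rw [hbot, Submodule.mem_bot] at hm
    exact hap ((Submodule.Quotient.mk_eq_zero p).mp hm)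
  have hrk := Submodule.rank_quotient_add_rank (q.map p.mkQ)
  rw [h] at hrk
  have h1 : (1 : Cardinal) ≤ Module.rank F ↥(q.map p.mkQ) :=
    Cardinal.one_le_iff_ne_zero.mpr (fun h0 => hq'ne (Submodule.rank_eq_zero.mp h0))
  have htop : Module.rank F ((L ⧸ p) ⧸ q.map p.mkQ) = 0 := by
    by_contra h0
    have h2 : (1 : Cardinal) + 1
        ≤ Module.rank F ((L ⧸ p) ⧸ q.map p.mkQ) + Module.rank F ↥(q.map p.mkQ) :=
      add_le_add (Cardinal.one_le_iff_ne_zero.mpr h0) h1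
    rw [hrk, one_add_one_eq_two] at h2
    exact Cardinal.one_lt_two.not_ge h2
  have h3 : q.map p.mkQ = ⊤ :=
    Submodule.Quotient.subsingleton_iff.mp (rank_zero_iff.mp htop)
  have h4 : p ⊔ q = ⊤ := (Submodule.map_mkQ_eq_top p q).mp h3
  rwa [sup_eq_right.mpr hpq.le] at h4

end AuxMax

/-- If an almost Abelian Lie algebra has two distinct codimension 1 Abelian ideals then it is
isomorphic to the direct sum `H_F ⊕ W` of the Heisenberg algebra with an Abelian Lie algebra,
realized here as `F e₀ ⋉ ((F × F) × W)` with `ad_{e₀} = heisT ⊕ 0`. -/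

theorem stmt10 (F : Type u) (L : Type v) [Field F] [LieRing L] [LieAlgebra F L]
    (hL : IsAlmostAbelian F L) (V₁ V₂ : LieIdeal F L) (hne : V₁ ≠ V₂)
    (h₁ : IsLieAbelian V₁) (hcod₁ : Module.rank F (L ⧸ V₁.toSubmodule) = 1)
    (h₂ : IsLieAbelian V₂) (hcod₂ : Module.rank F (L ⧸ V₂.toSubmodule) = 1) :
    ∃ (W : Type v) (_ : AddCommGroup W) (_ : Module F W),
      Nonempty (L ≃ₗ⁅F⁆ AA F ((F × F) × W) ((heisT F).prodMap (0 : Module.End F W))) := by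
  classical
  obtain ⟨hnab, -⟩ := hL
  have habP : ∀ (I : LieIdeal F L), IsLieAbelian I →
      ∀ u ∈ I.toSubmodule, ∀ v ∈ I.toSubmodule, ⁅u, v⁆ = (0 : L) := by
    intro I hI u hu v hv
    have hu' : u ∈ I := (LieSubmodule.mem_toSubmodule (N := I)).mp hu
    have hv' : v ∈ I := (LieSubmodule.mem_toSubmodule (N := I)).mp hv
    exact congrArg Subtype.val (hI.trivial (⟨u, hu'⟩ : I) (⟨v, hv'⟩ : I))
  have hne' : V₁.toSubmodule ≠ V₂.toSubmodule :=
    fun hh => hne (LieSubmodule.toSubmodule_injective hh)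
  have hnot : ¬ V₁.toSubmodule ≤ V₂.toSubmodule := by
    intro hle
    have : V₂.toSubmodule = ⊤ := aux_max hcod₁ (lt_of_le_of_ne hle hne')
    rw [this] at hcod₂
    have h0 : Module.rank F (L ⧸ (⊤ : Submodule F L)) = 0 :=
      rank_zero_iff.mpr (Submodule.Quotient.subsingleton_iff.mpr rfl)
    exact one_ne_zero (hcod₂.symm.trans h0)
  have hnot' : ¬ V₂.toSubmodule ≤ V₁.toSubmodule := by
    intro hle
    have : V₁.toSubmodule = ⊤ := aux_max hcod₂ (lt_of_le_of_ne hle hne'.symm)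
    rw [this] at hcod₁
    have h0 : Module.rank F (L ⧸ (⊤ : Submodule F L)) = 0 :=
      rank_zero_iff.mpr (Submodule.Quotient.subsingleton_iff.mpr rfl)
    exact one_ne_zero (hcod₁.symm.trans h0)
  obtain ⟨x, hx1, hx2⟩ := SetLike.not_le_iff_exists.mp hnot
  obtain ⟨y, hy2, hy1⟩ := SetLike.not_le_iff_exists.mp hnot'
  have hsup2 : V₂.toSubmodule ⊔ Submodule.span F {x} = ⊤ := by
    apply aux_max hcod₂
    have hxmem : x ∈ V₂.toSubmodule ⊔ Submodule.span F {x} :=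
      (le_sup_right : Submodule.span F {x} ≤ _) (Submodule.mem_span_singleton_self x)
    exact lt_of_le_of_ne le_sup_left (fun hh => hx2 (by rw [hh]; exact hxmem))
  have hsup1 : V₁.toSubmodule ⊔ Submodule.span F {y} = ⊤ := by
    apply aux_max hcod₁
    have hymem : y ∈ V₁.toSubmodule ⊔ Submodule.span F {y} :=
      (le_sup_right : Submodule.span F {y} ≤ _) (Submodule.mem_span_singleton_self y)
    exact lt_of_le_of_ne le_sup_left (fun hh => hy1 (by rw [hh]; exact hymem))
  set U : Submodule F L := V₁.toSubmodule ⊓ V₂.toSubmodule with hUdef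
  have hdec : ∀ l : L, ∃ t b : F, ∃ u ∈ U, l = t • x + b • y + u := by
    intro l
    have hl : l ∈ V₂.toSubmodule ⊔ Submodule.span F {x} := hsup2 ▸ Submodule.mem_top
    obtain ⟨v, hv, x', hx', rfl⟩ := Submodule.mem_sup.mp hl
    obtain ⟨t, rfl⟩ := Submodule.mem_span_singleton.mp hx'
    have hv1 : v ∈ V₁.toSubmodule ⊔ Submodule.span F {y} := hsup1 ▸ Submodule.mem_top
    obtain ⟨u, hu, y', hy', hveq⟩ := Submodule.mem_sup.mp hv1
    obtain ⟨b, rfl⟩ := Submodule.mem_span_singleton.mp hy'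
    have huU : u ∈ U := by
      refine Submodule.mem_inf.mpr ⟨hu, ?_⟩
      have hu2 : u = v - b • y := by rw [← hveq]; abel
      rw [hu2]
      exact Submodule.sub_mem _ hv (Submodule.smul_mem _ _ hy2)
    exact ⟨t, b, u, huU, by rw [← hveq]; abel⟩
  set z : L := ⁅x, y⁆ with hzdef
  have hab1 := habP V₁ h₁
  have hab2 := habP V₂ h₂
  have hzU : z ∈ U := Submodule.mem_inf.mpr
    ⟨(LieSubmodule.mem_toSubmodule (N := V₁)).mpr (lie_mem_left F L V₁ x y ((LieSubmodule.mem_toSubmodule (N := V₁)).mp hx1)),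
     (LieSubmodule.mem_toSubmodule (N := V₂)).mpr (lie_mem_right F L V₂ x y ((LieSubmodule.mem_toSubmodule (N := V₂)).mp hy2))⟩
  have hbr : ∀ (t b s d : F) (u u' : L), u ∈ U → u' ∈ U →
      ⁅t • x + b • y + u, s • x + d • y + u'⁆ = (t * d - s * b) • z := by
    intro t b s d u u' hu hu'
    have hu₁ := (Submodule.mem_inf.mp hu).1
    have hu₂ := (Submodule.mem_inf.mp hu).2
    have hu'₁ := (Submodule.mem_inf.mp hu').1
    have hu'₂ := (Submodule.mem_inf.mp hu').2
    have e3 : ⁅x, u'⁆ = (0 : L) := hab1 x hx1 u' hu'₁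
    have e4 : ⁅y, u'⁆ = (0 : L) := hab2 y hy2 u' hu'₂
    have e5 : ⁅u, x⁆ = (0 : L) := hab1 u hu₁ x hx1
    have e6 : ⁅u, y⁆ = (0 : L) := hab2 u hu₂ y hy2
    have e7 : ⁅u, u'⁆ = (0 : L) := hab1 u hu₁ u' hu'₁
    have e8 : ⁅y, x⁆ = -z := by rw [hzdef, ← lie_skew]
    have e9 : ⁅x, y⁆ = z := hzdef.symm
    simp only [add_lie, lie_add, smul_lie, lie_smul, lie_self, e3, e4, e5, e6, e7, e8, e9,
      smul_zero, zero_add, add_zero, smul_neg, smul_smul]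
    module
  have hz0 : z ≠ 0 := by
    intro h0
    apply hnab
    constructor
    intro a b
    obtain ⟨t, bb, u, hu, rfl⟩ := hdec a
    obtain ⟨s, d, u', hu', rfl⟩ := hdec b
    rw [hbr t bb s d u u' hu hu', h0, smul_zero]
  set zU : U := ⟨z, hzU⟩ with hzUdef
  have hzU0 : zU ≠ 0 := fun hh => hz0 (congrArg Subtype.val hh)
  obtain ⟨W, hWc⟩ := Submodule.exists_isCompl (Submodule.span F {zU})
  refine ⟨↥W, inferInstance, inferInstance, ?_⟩
  let g : AA F ((F × F) × ↥W) ((heisT F).prodMap (0 : Module.End F ↥W)) →ₗ[F] L :=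
    { toFun := fun p => p.1 • x + p.2.1.2 • y + (p.2.1.1 • z + ((p.2.2 : U) : L))
      map_add' := by
        rintro ⟨t, ⟨a, b⟩, w⟩ ⟨s, ⟨c, d⟩, w'⟩
        show (t + s) • x + (b + d) • y + ((a + c) • z + (((w + w' : ↥W) : U) : L)) = _
        push_cast
        module
      map_smul' := by
        rintro r ⟨t, ⟨a, b⟩, w⟩
        show (r * t) • x + (r * b) • y + ((r * a) • z + (((r • w : ↥W) : U) : L))
          = r • (t • x + b • y + (a • z + ((w : U) : L)))
        push_cast
        module }
  have hgval : ∀ (t a b : F) (w : ↥W),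
      g (t, (a, b), w) = t • x + b • y + (a • z + ((w : U) : L)) := fun _ _ _ _ => rfl
  have hmemU : ∀ (a : F) (w : ↥W), a • z + ((w : U) : L) ∈ U := by
    intro a w
    exact Submodule.add_mem _ (Submodule.smul_mem _ _ hzU) (SetLike.coe_mem ((w : U)))
  have hinj : Function.Injective g := by
    rw [← LinearMap.ker_eq_bot, eq_bot_iff]
    rintro ⟨t, ⟨a, b⟩, w⟩ hp
    have h0 : t • x + b • y + (a • z + ((w : U) : L)) = 0 := hp
    have hm2 : b • y + (a • z + ((w : U) : L)) ∈ V₂.toSubmodule :=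
      Submodule.add_mem _ (Submodule.smul_mem _ _ hy2)
        ((Submodule.mem_inf.mp (hmemU a w)).2)
    have hm1 : t • x + (a • z + ((w : U) : L)) ∈ V₁.toSubmodule :=
      Submodule.add_mem _ (Submodule.smul_mem _ _ hx1)
        ((Submodule.mem_inf.mp (hmemU a w)).1)
    have ht : t = 0 := by
      by_contra ht
      have hx2' : t • x ∈ V₂.toSubmodule := by
        have h0' : t • x + (b • y + (a • z + ((w : U) : L))) = 0 := by rw [← h0]; abel
        have : t • x = -(b • y + (a • z + ((w : U) : L))) := eq_neg_of_add_eq_zero_left h0'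
        rw [this]
        exact Submodule.neg_mem _ hm2
      have := Submodule.smul_mem V₂.toSubmodule t⁻¹ hx2'
      rw [smul_smul, inv_mul_cancel₀ ht, one_smul] at this
      exact hx2 this
    have hb : b = 0 := by
      by_contra hb
      have hy1' : b • y ∈ V₁.toSubmodule := by
        have h0'' : b • y + (t • x + (a • z + ((w : U) : L))) = 0 := by rw [← h0]; abel
        have : b • y = -(t • x + (a • z + ((w : U) : L))) := eq_neg_of_add_eq_zero_left h0''
        rw [this]
        exact Submodule.neg_mem _ hm1
      have := Submodule.smul_mem V₁.toSubmodule b⁻¹ hy1'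
      rw [smul_smul, inv_mul_cancel₀ hb, one_smul] at this
      exact hy1 this
    subst ht hb
    rw [zero_smul, zero_smul, zero_add, zero_add] at h0
    have hU0 : a • zU + (w : U) = 0 := by
      apply Subtype.ext
      push_cast
      exact h0
    have haz : a • zU = -(w : U) := eq_neg_of_add_eq_zero_left hU0
    have hmem : a • zU ∈ Submodule.span F {zU} ⊓ W := by
      refine Submodule.mem_inf.mpr ⟨Submodule.smul_mem _ _ (Submodule.mem_span_singleton_self zU), ?_⟩
      rw [haz]
      exact Submodule.neg_mem _ (SetLike.coe_mem w)
    rw [hWc.inf_eq_bot, Submodule.mem_bot] at hmem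
    have ha : a = 0 := by
      rcases smul_eq_zero.mp hmem with h | h
      · exact h
      · exact absurd h hzU0
    have hw : (w : U) = 0 := by
      rw [ha, zero_smul, zero_add] at hU0
      exact hU0
    subst ha
    refine Submodule.mem_bot (R := F) |>.mpr ?_
    have : w = 0 := Subtype.ext hw
    rw [this]
    rfl
  have hsurj : Function.Surjective g := by
    intro l
    obtain ⟨t, b, u, hu, rfl⟩ := hdec l
    have humem : (⟨u, hu⟩ : U) ∈ Submodule.span F {zU} ⊔ W := by
      rw [hWc.sup_eq_top]; trivial
    obtain ⟨zz, hzz, w, hw, heq⟩ := Submodule.mem_sup.mp humem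
    obtain ⟨a, rfl⟩ := Submodule.mem_span_singleton.mp hzz
    refine ⟨(t, (a, b), ⟨w, hw⟩), ?_⟩
    rw [hgval]
    have : a • z + ((w : U) : L) = u := by
      have h := congrArg Subtype.val heq
      push_cast at h
      exact h
    rw [this]
  have hlie : ∀ p q : AA F ((F × F) × ↥W) ((heisT F).prodMap (0 : Module.End F ↥W)),
      g ⁅p, q⁆ = ⁅g p, g q⁆ := by
    rintro ⟨t, ⟨a, b⟩, w⟩ ⟨s, ⟨c, d⟩, w'⟩
    have hLba : ⁅g (t, (a, b), w), g (s, (c, d), w')⁆ = (t * d - s * b) • z := by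
      rw [hgval, hgval]
      exact hbr t b s d _ _ (hmemU a w) (hmemU c w')
    show g ((0 : F), t • ((heisT F).prodMap (0 : Module.End F ↥W)) ((c, d), w')
        - s • ((heisT F).prodMap (0 : Module.End F ↥W)) ((a, b), w)) = _
    rw [hLba]
    have harg : (((0 : F), t • ((heisT F).prodMap (0 : Module.End F ↥W)) ((c, d), w')
        - s • ((heisT F).prodMap (0 : Module.End F ↥W)) ((a, b), w)) : F × ((F × F) × ↥W))
        = ((0 : F), ((t * d - s * b, 0), 0)) := by
      simp [heisT, Prod.ext_iff, smul_eq_mul]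
    rw [harg, hgval]
    simp
  let geq : (AA F ((F × F) × ↥W) ((heisT F).prodMap (0 : Module.End F ↥W))) ≃ₗ[F] L :=
    LinearEquiv.ofBijective g ⟨hinj, hsurj⟩
  exact ⟨(LieEquiv.mk { toLinearMap := g, map_lie' := by intros; exact hlie _ _ }
    geq.invFun geq.left_inv geq.right_inv).symm⟩
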